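/- Binomial transform of a J-fraction: Let ξ ∈ ℝ, let γ_0, γ_1, ... and β_1, β_2, ... be real numbers, and suppose Σ_{n≥0} a_n t^n is represented by the J-fraction with coefficients (γ, β). Then the ξ-binomial transform b, defined by b_n = Σ_{k=0}^n C(n,k) a_k ξ^{n−k}, satisfies that Σ_{n≥0} b_n t^n is represented by the J-fraction with coefficients (γ + ξ, β), i.e., with γ_n replaced by γ_n + ξ for every n and the same β. -/

import Mathlib

open PowerSeries

/-- A formal power series `h ∈ ℝ⟦t⟧` is represented by the J-fraction with
coefficients `(γ, β)` (here `β 0` is unused). -/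
def IsJFractionOf (γ β : ℕ → ℝ) (h : PowerSeries ℝ) : Prop :=
  ∃ H : ℕ → PowerSeries ℝ,
    (∀ k, H k * (1 - PowerSeries.C (γ k) * PowerSeries.X
        - PowerSeries.C (β (k + 1)) * PowerSeries.X ^ 2 * H (k + 1)) = 1) ∧
    h = H 0

namespace BinomJFrac

open Finset

private theorem K (i : ℕ) : ∀ n j : ℕ, ∑ q ∈ range (n+1), q.choose i * (n-q).choose j = (n+1).choose (i+j+1) := by
  intro n
  induction n with
  | zero => intro j; cases i <;> cases j <;> simp [Nat.choose]
  | succ n ih =>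
    intro j
    rw [Finset.sum_range_succ]
    have hcong : ∀ q ∈ range (n+1), q.choose i * (n+1-q).choose j
        = q.choose i * ((n-q)+1).choose j := by
      intro q hq
      rw [Finset.mem_range] at hq
      congr 2
      omega
    rw [Finset.sum_congr rfl hcong]
    cases j with
    | zero =>
      have h0 := ih 0
      have h2 := Nat.choose_succ_succ (n+1) i
      simp only [Nat.choose_zero_right, mul_one, Nat.add_zero, Nat.succ_eq_add_one] at h0 h2 ⊢
      omega
    | succ j =>
      have : ∀ q ∈ range (n+1), q.choose i * ((n-q)+1).choose (j+1)
          = q.choose i * (n-q).choose j + q.choose i * (n-q).choose (j+1) := by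
        intro q _
        rw [Nat.choose_succ_succ, mul_add]
      rw [Finset.sum_congr rfl this, Finset.sum_add_distrib, ih j, ih (j+1)]
      have h2 := Nat.choose_succ_succ (n+1) (i+j+1)
      simp only [Nat.sub_self, Nat.choose_zero_succ, mul_zero, add_zero, Nat.succ_eq_add_one,
        show i+(j+1)+1 = i+j+1+1 from by omega] at h2 ⊢
      omega

noncomputable def U (ξ : ℝ) : PowerSeries ℝ := PowerSeries.mk fun n => ξ ^ n

noncomputable def T (ξ : ℝ) (f : PowerSeries ℝ) : PowerSeries ℝ :=
  PowerSeries.mk fun n => ∑ k ∈ Finset.range (n+1),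
    (n.choose k : ℝ) * (PowerSeries.coeff k f) * ξ ^ (n-k)

lemma hDU (ξ : ℝ) : (1 - PowerSeries.C ξ * X) * U ξ = 1 := by
  ext n
  cases n with
  | zero =>
    simp [U, coeff_zero_eq_constantCoeff, map_sub, map_mul]
  | succ n =>
    rw [sub_mul, one_mul, map_sub, mul_assoc, coeff_C_mul, coeff_succ_X_mul]
    simp [U, pow_succ, coeff_one]
    ring

lemma U_ne (ξ : ℝ) : U ξ ≠ 0 := by
  intro h
  have := hDU ξ
  rw [h, mul_zero] at this
  exact one_ne_zero this.symm

lemma T_one (ξ : ℝ) : T ξ 1 = U ξ := by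
  ext n
  simp [T, U, coeff_one, mul_ite, ite_mul, Finset.sum_ite_eq']

lemma T_sub (ξ : ℝ) (f g : PowerSeries ℝ) : T ξ (f - g) = T ξ f - T ξ g := by
  ext n
  simp [T, mul_sub, sub_mul, Finset.sum_sub_distrib]

lemma T_C_mul (ξ r : ℝ) (f : PowerSeries ℝ) : T ξ (PowerSeries.C r * f) = PowerSeries.C r * T ξ f := by
  ext n
  simp only [T, coeff_mk, coeff_C_mul, Finset.mul_sum]
  exact Finset.sum_congr rfl fun k _ => by ring

lemma T_X (ξ : ℝ) : T ξ X = X * (U ξ * U ξ) := by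
  ext n
  cases n with
  | zero => simp [T, U, coeff_X]
  | succ n =>
    rw [coeff_succ_X_mul, coeff_mul]
    have h1 : (coeff (n+1)) (T ξ X) = (n+1 : ℝ) * ξ ^ n := by
      simp only [T, coeff_mk, coeff_X]
      rw [Finset.sum_eq_single 1]
      · simp
      · intro b _ hb; simp [hb]
      · intro h; simp at h
    rw [h1]
    have h2 : ∀ p ∈ antidiagonal n, (coeff p.1) (U ξ) * (coeff p.2) (U ξ) = ξ ^ n := by
      intro p hp
      rw [Finset.HasAntidiagonal.mem_antidiagonal] at hp
      simp [U, ← pow_add, hp]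
    rw [Finset.sum_congr rfl h2, Finset.sum_const, Finset.Nat.card_antidiagonal]
    simp [nsmul_eq_mul]

lemma Hsum (ξ : ℝ) (k n : ℕ) :
    ∑ q ∈ range (n+1), (q.choose k : ℝ) * ξ ^ ((n-q)+(q-k)) =
      ((n+1).choose (k+1) : ℝ) * ξ ^ (n-k) := by
  have step : ∀ q ∈ range (n+1), (q.choose k : ℝ) * ξ ^ ((n-q)+(q-k)) =
      (q.choose k : ℝ) * ξ ^ (n-k) := by
    intro q hq
    rw [Finset.mem_range] at hq
    by_cases h : k ≤ q
    · congr 2; omega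
    · rw [Nat.choose_eq_zero_of_lt (by omega)]; simp
  rw [Finset.sum_congr rfl step, ← Finset.sum_mul]
  congr 1
  rw [← Nat.cast_sum]
  congr 1
  have : ∑ q ∈ Finset.Icc k n, q.choose k = ∑ q ∈ range (n+1), q.choose k := by
    apply Finset.sum_subset
    · intro x hx
      simp only [Finset.mem_Icc] at hx
      rw [Finset.mem_range]; omega
    · intro x hx hx2
      simp only [Finset.mem_range] at hx
      simp only [Finset.mem_Icc] at hx2
      exact Nat.choose_eq_zero_of_lt (by omega)
  rw [← this, Nat.sum_Icc_choose]

lemma Ksum (ξ : ℝ) (i j n : ℕ) :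
    ∑ q ∈ range (n+1), (q.choose i : ℝ) * ((n-q).choose j : ℝ) * ξ ^ ((q-i)+((n-q)-j)) =
      ((n+1).choose (i+j+1) : ℝ) * ξ ^ (n-(i+j)) := by
  have step : ∀ q ∈ range (n+1), (q.choose i : ℝ) * ((n-q).choose j : ℝ) * ξ ^ ((q-i)+((n-q)-j)) =
      (q.choose i : ℝ) * ((n-q).choose j : ℝ) * ξ ^ (n-(i+j)) := by
    intro q hq
    rw [Finset.mem_range] at hq
    by_cases h1 : i ≤ q
    · by_cases h2 : j ≤ n - q
      · congr 2; omega
      · rw [Nat.choose_eq_zero_of_lt (show n - q < j by omega)]; simp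
    · rw [Nat.choose_eq_zero_of_lt (show q < i by omega)]; simp
  rw [Finset.sum_congr rfl step, ← Finset.sum_mul]
  congr 1
  have : ∀ q ∈ range (n+1), (q.choose i : ℝ) * ((n-q).choose j : ℝ)
      = ((q.choose i * (n-q).choose j : ℕ) : ℝ) := by
    intro q _; push_cast; ring
  rw [Finset.sum_congr rfl this, ← Nat.cast_sum, K]

lemma T_mul (ξ : ℝ) (f g : PowerSeries ℝ) : T ξ f * T ξ g = T ξ (f * g) * U ξ := by
  ext n
  rw [coeff_mul, coeff_mul, Finset.Nat.sum_antidiagonal_eq_sum_range_succ_mk,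
    Finset.Nat.sum_antidiagonal_eq_sum_range_succ_mk]
  simp only [T, U, coeff_mk]
  set F : ℕ → ℕ → ℝ := fun i j =>
    f.coeff i * g.coeff j * (((n+1).choose (i+j+1) : ℝ) * ξ ^ (n-(i+j))) with hF
  -- LHS = square sum
  have hL : ∑ q ∈ range (n+1),
      (∑ i ∈ range (q+1), (q.choose i : ℝ) * f.coeff i * ξ ^ (q-i)) *
      (∑ j ∈ range (n-q+1), ((n-q).choose j : ℝ) * g.coeff j * ξ ^ ((n-q)-j)) =
      ∑ i ∈ range (n+1), ∑ j ∈ range (n+1), F i j := by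
    have step1 : ∀ q ∈ range (n+1),
        (∑ i ∈ range (q+1), (q.choose i : ℝ) * f.coeff i * ξ ^ (q-i)) *
        (∑ j ∈ range (n-q+1), ((n-q).choose j : ℝ) * g.coeff j * ξ ^ ((n-q)-j)) =
        ∑ i ∈ range (n+1), ∑ j ∈ range (n+1),
          ((q.choose i : ℝ) * f.coeff i * ξ ^ (q-i)) *
          (((n-q).choose j : ℝ) * g.coeff j * ξ ^ ((n-q)-j)) := by
      intro q hq
      rw [Finset.mem_range] at hq
      have e1 : ∑ i ∈ range (q+1), (q.choose i : ℝ) * f.coeff i * ξ ^ (q-i)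
          = ∑ i ∈ range (n+1), (q.choose i : ℝ) * f.coeff i * ξ ^ (q-i) := by
        apply Finset.sum_subset
        · exact Finset.range_subset_range.2 (by omega)
        · intro x _ hx
          rw [Finset.mem_range] at hx
          rw [Nat.choose_eq_zero_of_lt (by omega)]
          simp
      have e2 : ∑ j ∈ range (n-q+1), ((n-q).choose j : ℝ) * g.coeff j * ξ ^ ((n-q)-j)
          = ∑ j ∈ range (n+1), ((n-q).choose j : ℝ) * g.coeff j * ξ ^ ((n-q)-j) := by
        apply Finset.sum_subset
        · exact Finset.range_subset_range.2 (by omega)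
        · intro x _ hx
          rw [Finset.mem_range] at hx
          rw [Nat.choose_eq_zero_of_lt (by omega)]
          simp
      rw [e1, e2, Finset.sum_mul_sum]
    rw [Finset.sum_congr rfl step1]
    rw [Finset.sum_comm]
    refine Finset.sum_congr rfl fun i _ => ?_
    rw [Finset.sum_comm]
    refine Finset.sum_congr rfl fun j _ => ?_
    have e3 : ∀ q ∈ range (n+1),
        ((q.choose i : ℝ) * f.coeff i * ξ ^ (q-i)) *
        (((n-q).choose j : ℝ) * g.coeff j * ξ ^ ((n-q)-j)) =
        f.coeff i * g.coeff j *
          ((q.choose i : ℝ) * ((n-q).choose j : ℝ) * ξ ^ ((q-i)+((n-q)-j))) := by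
      intro q _
      rw [pow_add]; ring
    rw [Finset.sum_congr rfl e3, ← Finset.mul_sum, Ksum]
  rw [hL]
  -- RHS = triangle sum
  have hR : ∑ q ∈ range (n+1),
      (∑ k ∈ range (q+1), (q.choose k : ℝ) * (f*g).coeff k * ξ ^ (q-k)) * ξ ^ (n-q) =
      ∑ k ∈ range (n+1), ∑ i ∈ range (k+1),
        f.coeff i * g.coeff (k-i) * (((n+1).choose (k+1) : ℝ) * ξ ^ (n-k)) := by
    have step1 : ∀ q ∈ range (n+1),
        (∑ k ∈ range (q+1), (q.choose k : ℝ) * (f*g).coeff k * ξ ^ (q-k)) * ξ ^ (n-q) =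
        ∑ k ∈ range (n+1), (f*g).coeff k * ((q.choose k : ℝ) * ξ ^ ((n-q)+(q-k))) := by
      intro q hq
      rw [Finset.mem_range] at hq
      have e1 : ∑ k ∈ range (q+1), (q.choose k : ℝ) * (f*g).coeff k * ξ ^ (q-k)
          = ∑ k ∈ range (n+1), (q.choose k : ℝ) * (f*g).coeff k * ξ ^ (q-k) := by
        apply Finset.sum_subset
        · exact Finset.range_subset_range.2 (by omega)
        · intro x _ hx
          rw [Finset.mem_range] at hx
          rw [Nat.choose_eq_zero_of_lt (by omega)]
          simp
      rw [e1, Finset.sum_mul]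
      refine Finset.sum_congr rfl fun k _ => ?_
      rw [pow_add]; ring
    rw [Finset.sum_congr rfl step1, Finset.sum_comm]
    refine Finset.sum_congr rfl fun k _ => ?_
    rw [← Finset.mul_sum, Hsum, coeff_mul, Finset.Nat.sum_antidiagonal_eq_sum_range_succ_mk,
      Finset.sum_mul]
  rw [hR]
  -- triangle = square
  have hT : ∑ k ∈ range (n+1), ∑ i ∈ range (k+1),
      f.coeff i * g.coeff (k-i) * (((n+1).choose (k+1) : ℝ) * ξ ^ (n-k)) =
      ∑ i ∈ range (n+1), ∑ j ∈ range (n+1), F i j := by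
    rw [← Finset.sum_product']
    have hzero : ∀ p ∈ range (n+1) ×ˢ range (n+1), F p.1 p.2 ≠ 0 → p.1 + p.2 ≤ n := by
      intro p _ hne
      by_contra hc
      apply hne
      rw [hF]
      simp only
      rw [Nat.choose_eq_zero_of_lt (by omega)]
      simp
    rw [← Finset.sum_filter_of_ne hzero, Finset.sum_sigma']
    apply Finset.sum_nbij' (i := fun x => (x.2, x.1 - x.2)) (j := fun p => ⟨p.1 + p.2, p.1⟩)
    · intro x hx
      simp only [Finset.mem_sigma, Finset.mem_range] at hx
      simp only [Finset.mem_filter, Finset.mem_product, Finset.mem_range]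
      omega
    · intro p hp
      simp only [Finset.mem_filter, Finset.mem_product, Finset.mem_range] at hp
      simp only [Finset.mem_sigma, Finset.mem_range]
      omega
    · intro x hx
      simp only [Finset.mem_sigma, Finset.mem_range] at hx
      ext <;> simp <;> omega
    · intro p hp
      simp only [Finset.mem_filter, Finset.mem_product, Finset.mem_range] at hp
      simp
    · intro x hx
      simp only [Finset.mem_sigma, Finset.mem_range] at hx
      rw [hF]
      simp only
      rw [show x.2 + (x.1 - x.2) = x.1 from by omega]
  rw [hT]

lemma T_sq_mul (ξ : ℝ) (h : PowerSeries ℝ) :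
    T ξ (X^2 * h) = X^2 * (U ξ * U ξ) * T ξ h := by
  have a1 : T ξ X * T ξ X = T ξ (X * X) * U ξ := T_mul ξ X X
  have a2 : T ξ (X * X) * T ξ h = T ξ (X * X * h) * U ξ := T_mul ξ (X * X) h
  rw [T_X] at a1
  have key : T ξ (X^2 * h) * (U ξ * U ξ) = (X^2 * (U ξ * U ξ) * T ξ h) * (U ξ * U ξ) := by
    have hxx : X^2 * h = X * X * h := by ring
    rw [hxx]
    linear_combination (-(U ξ)) * a2 - T ξ h * a1
  exact mul_right_cancel₀ (mul_ne_zero (U_ne ξ) (U_ne ξ)) key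

end BinomJFrac

open BinomJFrac in
/-- Binomial transform of a J-fraction: if `∑ a_n t^n` is represented by the
J-fraction with coefficients `(γ, β)`, then the `ξ`-binomial transform
`b_n = ∑_{k=0}^n C(n,k) a_k ξ^{n-k}` has generating function represented by the
J-fraction with coefficients `(γ + ξ, β)`. -/
theorem binomial_transform_jfraction (ξ : ℝ) (γ β : ℕ → ℝ) (a : ℕ → ℝ)
    (ha : IsJFractionOf γ β (PowerSeries.mk a)) :
    IsJFractionOf (fun n => γ n + ξ) β
      (PowerSeries.mk fun n =>
        ∑ k ∈ Finset.range (n + 1), (n.choose k : ℝ) * a k * ξ ^ (n - k)) := by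
  obtain ⟨H, hH, h0⟩ := ha
  refine ⟨fun k => T ξ (H k), fun k => ?_, ?_⟩
  · have h1 := hH k
    have e1 : T ξ (H k * (1 - PowerSeries.C (γ k) * X
        - PowerSeries.C (β (k + 1)) * X ^ 2 * H (k + 1))) = U ξ := by
      rw [h1, T_one]
    have e2 : T ξ (H k) * T ξ (1 - PowerSeries.C (γ k) * X
        - PowerSeries.C (β (k + 1)) * X ^ 2 * H (k + 1)) = U ξ * U ξ := by
      rw [T_mul, e1]
    have eM : T ξ (1 - PowerSeries.C (γ k) * X
        - PowerSeries.C (β (k + 1)) * X ^ 2 * H (k + 1))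
        = U ξ - PowerSeries.C (γ k) * (X * (U ξ * U ξ))
          - PowerSeries.C (β (k + 1)) * (X^2 * (U ξ * U ξ) * T ξ (H (k + 1))) := by
      rw [T_sub, T_sub, T_one, T_C_mul, T_X, mul_assoc, T_C_mul, T_sq_mul]
    rw [eM] at e2
    have hdu := hDU ξ
    have key : T ξ (H k) * (1 - PowerSeries.C (γ k + ξ) * X
        - PowerSeries.C (β (k + 1)) * X ^ 2 * T ξ (H (k + 1))) * (U ξ * U ξ)
        = 1 * (U ξ * U ξ) := by
      rw [map_add]
      linear_combination e2 + (T ξ (H k) * U ξ) * hdu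
    exact mul_right_cancel₀ (mul_ne_zero (U_ne ξ) (U_ne ξ)) key
  · show _ = T ξ (H 0)
    rw [← h0]
    ext n
    simp [T]
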